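/- arXiv:1702.01192 — 4 statements merged into one kernel-verified Lean document; each statement's English description precedes it below -/
import Mathlib

section
/- Let r>0 and let α>0, β>0 be such that β ≠ -c_m·α - c_m^2 for every integer m≥1, where c_m = -(π/r)^2·((2m-1)/4)^2. If x is a four times continuously differentiable real function on [-r,r] satisfying x''''(s) + α·x''(s) + β·x(s) = 0 for all s ∈ [-r,r], x'(-r) = x'''(-r) = 0 and x(r) = x''(r) = 0, then x(s) = 0 for all s ∈ [-r,r]. -/
open Real Set

/-- Uniqueness for the second order problem `y'' = w² y`, `y'(-r) = 0`, `y(r) = 0`,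
provided `cosh (2 r w) ≠ 0`. Proved via two Wronskians with `cosh` and `sinh`. -/
lemma aux_second_order (r : ℝ) (hr : 0 ≤ r) (w : ℂ) (hw : w ≠ 0)
    (hcosh : Complex.cosh (2 * r * w) ≠ 0)
    (y y' : ℝ → ℂ)
    (hy : ∀ s : ℝ, HasDerivAt y (y' s) s)
    (hy' : ∀ s ∈ Icc (-r) r, HasDerivAt y' (w ^ 2 * y s) s)
    (h1 : y' (-r) = 0) (h2 : y r = 0) :
    ∀ s ∈ Icc (-r) r, y s = 0 := by
  set C : ℝ → ℂ := fun s => Complex.cosh (w * ((s : ℂ) + (r : ℂ))) with hCdef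
  set S : ℝ → ℂ := fun s => Complex.sinh (w * ((s : ℂ) + (r : ℂ))) with hSdef
  have hinner : ∀ u : ℂ, HasDerivAt (fun v : ℂ => w * (v + (r : ℂ))) w u := by
    intro u
    simpa using ((hasDerivAt_id u).add_const (r : ℂ)).const_mul w
  have hC : ∀ s : ℝ, HasDerivAt C (w * S s) s := by
    intro s
    have : HasDerivAt (fun u : ℂ => Complex.cosh (w * (u + (r : ℂ))))
        (Complex.sinh (w * ((s : ℂ) + (r : ℂ))) * w) (s : ℂ) :=
      (Complex.hasDerivAt_cosh _).comp _ (hinner _)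
    simpa [hCdef, hSdef, mul_comm] using this.comp_ofReal
  have hS : ∀ s : ℝ, HasDerivAt S (w * C s) s := by
    intro s
    have : HasDerivAt (fun u : ℂ => Complex.sinh (w * (u + (r : ℂ))))
        (Complex.cosh (w * ((s : ℂ) + (r : ℂ))) * w) (s : ℂ) :=
      (Complex.hasDerivAt_sinh _).comp _ (hinner _)
    simpa [hCdef, hSdef, mul_comm] using this.comp_ofReal
  -- Wronskian with cosh
  set W : ℝ → ℂ := fun s => y s * (w * S s) - y' s * C s with hWdef
  have hW : ∀ s ∈ Icc (-r) r, HasDerivAt W 0 s := by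
    intro s hs
    have h := ((hy s).mul ((hS s).const_mul w)).sub ((hy' s hs).mul (hC s))
    exact h.congr_deriv (by ring)
  have hWconst : ∀ s ∈ Icc (-r) r, W s = W (-r) :=
    constant_of_has_deriv_right_zero
      (fun s hs => ((hW s hs).continuousAt).continuousWithinAt)
      (fun s hs => (hW s (Ico_subset_Icc_self hs)).hasDerivWithinAt)
  have hWr : W (-r) = 0 := by
    simp [hWdef, hSdef, h1]
  -- Wronskian with sinh
  set V : ℝ → ℂ := fun s => y s * (w * C s) - y' s * S s with hVdef
  have hV : ∀ s ∈ Icc (-r) r, HasDerivAt V 0 s := by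
    intro s hs
    have h := ((hy s).mul ((hC s).const_mul w)).sub ((hy' s hs).mul (hS s))
    exact h.congr_deriv (by ring)
  have hVconst : ∀ s ∈ Icc (-r) r, V s = V (-r) :=
    constant_of_has_deriv_right_zero
      (fun s hs => ((hV s hs).continuousAt).continuousWithinAt)
      (fun s hs => (hV s (Ico_subset_Icc_self hs)).hasDerivWithinAt)
  have hVr : V (-r) = y (-r) * w := by
    simp [hVdef, hCdef, hSdef, h1]
  -- the representation y s * w = y (-r) * w * C s
  have hrep : ∀ s ∈ Icc (-r) r, y s * w = y (-r) * w * C s := by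
    intro s hs
    have hcs : C s ^ 2 - S s ^ 2 = 1 := by
      simpa [hCdef, hSdef] using Complex.cosh_sq_sub_sinh_sq (w * ((s : ℂ) + (r : ℂ)))
    have e1 : V s * C s - W s * S s = y s * w * (C s ^ 2 - S s ^ 2) := by
      simp only [hVdef, hWdef]; ring
    rw [hcs, mul_one] at e1
    rw [← e1, hVconst s hs, hWconst s hs, hWr, hVr]
    ring
  have hrmem : r ∈ Icc (-r) r := right_mem_Icc.mpr (by linarith)
  have hyr0 : y (-r) = 0 := by
    have := hrep r hrmem
    rw [h2, zero_mul] at this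
    have hC2r : C r = Complex.cosh (2 * r * w) := by
      simp only [hCdef]
      ring_nf
    rw [hC2r] at this
    rcases mul_eq_zero.mp this.symm with h | h
    · rcases mul_eq_zero.mp h with h' | h'
      · exact h'
      · exact absurd h' hw
    · exact absurd h hcosh
  intro s hs
  have := hrep s hs
  rw [hyr0, zero_mul, zero_mul] at this
  exact (mul_eq_zero.mp this).resolve_right hw

/-- If `(α,β)` lies on no ray `l_m`, the linear boundary value problem has only
the trivial solution. -/
theorem stmt_1 (r : ℝ) (hr : 0 < r)
    (c : ℕ → ℝ)
    (hc : ∀ m : ℕ, c m = -(π / r) ^ 2 * ((2 * (m : ℝ) - 1) / 4) ^ 2)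
    (α β : ℝ) (hα : 0 < α) (hβ : 0 < β)
    (hray : ∀ m : ℕ, 1 ≤ m → β ≠ -(c m) * α - (c m) ^ 2)
    (x : ℝ → ℝ) (hx : ContDiff ℝ 4 x)
    (hode : ∀ s ∈ Icc (-r) r,
      iteratedDeriv 4 x s + α * iteratedDeriv 2 x s + β * x s = 0)
    (hbc1 : iteratedDeriv 1 x (-r) = 0) (hbc2 : iteratedDeriv 3 x (-r) = 0)
    (hbc3 : x r = 0) (hbc4 : iteratedDeriv 2 x r = 0) :
    ∀ s ∈ Icc (-r) r, x s = 0 := by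
  -- complexified iterated derivatives
  set X : ℕ → ℝ → ℂ := fun n s => ((iteratedDeriv n x s : ℝ) : ℂ) with hXdef
  have hd : ∀ n : ℕ, n < 4 → ∀ s : ℝ, HasDerivAt (X n) (X (n + 1) s) s := by
    intro n hn s
    have hdiff : Differentiable ℝ (iteratedDeriv n x) :=
      hx.differentiable_iteratedDeriv n (by exact_mod_cast hn)
    have : HasDerivAt (iteratedDeriv n x) (iteratedDeriv (n + 1) x s) s := by
      rw [iteratedDeriv_succ]
      exact (hdiff s).hasDerivAt
    exact this.ofReal_comp
  have hodeC : ∀ s ∈ Icc (-r) r,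
      X 4 s + (α : ℂ) * X 2 s + (β : ℂ) * X 0 s = 0 := by
    intro s hs
    have := hode s hs
    simp only [hXdef]
    exact_mod_cast congrArg (fun t : ℝ => (t : ℂ)) this
  -- the two roots of z² + αz + β
  obtain ⟨w₀, hw₀⟩ := IsAlgClosed.exists_pow_nat_eq ((α : ℂ) ^ 2 - 4 * (β : ℂ)) (by norm_num : 0 < 2)
  set lam₁ : ℂ := (-(α : ℂ) + w₀) / 2 with hlam₁
  set lam₂ : ℂ := (-(α : ℂ) - w₀) / 2 with hlam₂
  have hroot₁ : lam₁ ^ 2 + α * lam₁ + β = 0 := by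
    rw [hlam₁]; linear_combination (1 / 4 : ℂ) * hw₀
  have hroot₂ : lam₂ ^ 2 + α * lam₂ + β = 0 := by
    rw [hlam₂]; linear_combination (1 / 4 : ℂ) * hw₀
  have hprod : lam₁ * lam₂ = β := by
    rw [hlam₁, hlam₂]; linear_combination (-(1 : ℂ) / 4) * hw₀
  have hβC : (β : ℂ) ≠ 0 := by exact_mod_cast hβ.ne'
  have hlam₁0 : lam₁ ≠ 0 := fun h => hβC (by rw [← hprod, h, zero_mul])
  have hlam₂0 : lam₂ ≠ 0 := fun h => hβC (by rw [← hprod, h, mul_zero])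
  obtain ⟨w₁, hw₁⟩ := IsAlgClosed.exists_pow_nat_eq lam₁ (by norm_num : 0 < 2)
  obtain ⟨w₂, hw₂⟩ := IsAlgClosed.exists_pow_nat_eq lam₂ (by norm_num : 0 < 2)
  have hw₁0 : w₁ ≠ 0 := fun h => hlam₁0 (by rw [← hw₁, h]; ring)
  have hw₂0 : w₂ ≠ 0 := fun h => hlam₂0 (by rw [← hw₂, h]; ring)
  -- cosh (2 r wᵢ) ≠ 0, using the ray condition
  have key : ∀ lam w : ℂ, lam ^ 2 + α * lam + β = 0 → w ^ 2 = lam →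
      Complex.cosh (2 * r * w) ≠ 0 := by
    intro lam w hroot hw hzero
    rw [← Complex.cos_mul_I] at hzero
    obtain ⟨k, hk⟩ := Complex.cos_eq_zero_iff.mp hzero
    have hk2 : (2 * (r : ℂ) * w * Complex.I) ^ 2 = ((2 * (k : ℂ) + 1) * π / 2) ^ 2 := by
      rw [hk]
    have hrC : (r : ℂ) ≠ 0 := by exact_mod_cast hr.ne'
    have hlamval : (16 : ℂ) * r ^ 2 * lam = -((2 * (k : ℂ) + 1) ^ 2 * π ^ 2) := by
      linear_combination (-4 : ℂ) * hk2 - 16 * (r : ℂ) ^ 2 * hw +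
        (16 * (r : ℂ) ^ 2 * w ^ 2) * Complex.I_sq
    set m : ℕ := if 0 ≤ k then k.toNat + 1 else (-k).toNat with hm
    have hm1 : 1 ≤ m := by
      rw [hm]; split
      · omega
      · omega
    have hsq : (2 * (m : ℝ) - 1) ^ 2 = (2 * (k : ℝ) + 1) ^ 2 := by
      rw [hm]; split <;> rename_i hk0
      · have : ((k.toNat : ℝ)) = (k : ℝ) := by exact_mod_cast Int.toNat_of_nonneg hk0
        push_cast [this]
        ring
      · have h1 : ((-k).toNat : ℤ) = -k := Int.toNat_of_nonneg (by omega)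
        have : (((-k).toNat : ℝ)) = -(k : ℝ) := by exact_mod_cast h1
        push_cast [this]
        ring
    have hcm : lam = ((c m : ℝ) : ℂ) := by
      have h16 : ((16 : ℂ) * (r : ℂ) ^ 2) ≠ 0 := by
        intro h
        rcases mul_eq_zero.mp h with h' | h'
        · norm_num at h'
        · exact hrC (pow_eq_zero_iff (by norm_num) |>.mp h')
      have hr0 : r ≠ 0 := hr.ne'
      have hc16R : (c m) * (16 * r ^ 2) = -((2 * (k : ℝ) + 1) ^ 2 * π ^ 2) := by
        rw [hc m, ← hsq]
        field_simp
        ring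
      have hc16 : ((c m : ℝ) : ℂ) * (16 * (r : ℂ) ^ 2)
          = -((2 * (k : ℂ) + 1) ^ 2 * (π : ℂ) ^ 2) := by exact_mod_cast hc16R
      apply mul_left_cancel₀ h16
      linear_combination hlamval - hc16
    have : ((c m) ^ 2 + α * c m + β : ℝ) = 0 := by
      have := hroot
      rw [hcm] at this
      exact_mod_cast this
    exact hray m hm1 (by linarith) 
  have hcosh₁ := key lam₁ w₁ hroot₁ hw₁
  have hcosh₂ := key lam₂ w₂ hroot₂ hw₂
  -- first reduction: y = x'' - lam₂ x satisfies y'' = lam₁ y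
  set y : ℝ → ℂ := fun s => X 2 s - lam₂ * X 0 s with hydef
  set y' : ℝ → ℂ := fun s => X 3 s - lam₂ * X 1 s with hy'def
  have hy : ∀ s : ℝ, HasDerivAt y (y' s) s := fun s =>
    (hd 2 (by norm_num) s).sub ((hd 0 (by norm_num) s).const_mul lam₂)
  have hy' : ∀ s ∈ Icc (-r) r, HasDerivAt y' (w₁ ^ 2 * y s) s := by
    intro s hs
    have h := (hd 3 (by norm_num) s).sub ((hd 1 (by norm_num) s).const_mul lam₂)
    refine h.congr_deriv (Eq.symm ?_)
    have hode' := hodeC s hs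
    rw [hw₁, hydef, hlam₁, hlam₂]
    simp only [hlam₂] at *
    linear_combination -hode' + (X 0 s / 4) * hw₀
  have hy1 : y' (-r) = 0 := by
    simp only [hy'def, hXdef, hbc2, hbc1, Complex.ofReal_zero]
    ring
  have hy2 : y r = 0 := by
    simp only [hydef, hXdef, hbc4, iteratedDeriv_zero, hbc3, Complex.ofReal_zero]
    ring
  have hyzero : ∀ s ∈ Icc (-r) r, y s = 0 :=
    aux_second_order r hr.le w₁ hw₁0 hcosh₁ y y' hy hy' hy1 hy2
  -- second reduction: x'' = lam₂ x on Icc, so x solves z'' = lam₂ z with the same bc's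
  have hz' : ∀ s ∈ Icc (-r) r, HasDerivAt (X 1) (w₂ ^ 2 * X 0 s) s := by
    intro s hs
    have h := hd 1 (by norm_num) s
    have h0 := hyzero s hs
    have h2 : X 2 s = w₂ ^ 2 * X 0 s := by
      rw [hw₂]
      simp only [hydef] at h0
      linear_combination h0
    rwa [h2] at h
  have hX1bc : X 1 (-r) = 0 := by
    simp only [hXdef, hbc1, Complex.ofReal_zero]
  have hX0bc : X 0 r = 0 := by
    simp only [hXdef, iteratedDeriv_zero, hbc3, Complex.ofReal_zero]
  have hx0 : ∀ s ∈ Icc (-r) r, X 0 s = 0 :=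
    aux_second_order r hr.le w₂ hw₂0 hcosh₂ (X 0) (X 1) (hd 0 (by norm_num)) hz' hX1bc hX0bc
  intro s hs
  have h := hx0 s hs
  simp only [hXdef, iteratedDeriv_zero, Complex.ofReal_eq_zero] at h
  exact h
end

section
/- Let r>0, let α>0, β>0, and suppose there is exactly one integer m≥1 with β = -c_m·α - c_m^2 (i.e. (α,β) lies on the ray l_m and on no other ray l_k, k≠m), where c_m = -(π/r)^2·((2m-1)/4)^2. Then every four times continuously differentiable function x on [-r,r] satisfying x'''' + α·x'' + β·x = 0 on [-r,r], x'(-r) = x'''(-r) = 0 and x(r) = x''(r) = 0 is a scalar multiple of e_m(s) = 2·cos(ω_m(s+r)), where ω_m = ((2m-1)π)/(4r). In particular the solution space of the linear boundary value problem is one-dimensional. -/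
open Real Set

private noncomputable def odeL (α β : ℝ) : (ℝ×ℝ×ℝ×ℝ) →L[ℝ] (ℝ×ℝ×ℝ×ℝ) :=
  LinearMap.toContinuousLinearMap
  { toFun := fun u => (u.2.1, u.2.2.1, u.2.2.2, -(α * u.2.2.1) - β * u.1)
    map_add' := by intros; ext <;> simp <;> ring
    map_smul' := by intros; ext <;> simp <;> ring }

private lemma uniq4 {α β r : ℝ} {x : ℝ → ℝ} (hx : ContDiff ℝ 4 x)
    (hode : ∀ s ∈ Icc (-r) r,
      iteratedDeriv 4 x s + α * iteratedDeriv 2 x s + β * x s = 0)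
    (X X1 X2 X3 : ℝ → ℝ)
    (hX1 : ∀ s, HasDerivAt X (X1 s) s) (hX2 : ∀ s, HasDerivAt X1 (X2 s) s)
    (hX3 : ∀ s, HasDerivAt X2 (X3 s) s)
    (hX4 : ∀ s, HasDerivAt X3 (-(α * X2 s) - β * X s) s)
    (h0 : x (-r) = X (-r)) (h1 : iteratedDeriv 1 x (-r) = X1 (-r))
    (h2 : iteratedDeriv 2 x (-r) = X2 (-r)) (h3 : iteratedDeriv 3 x (-r) = X3 (-r)) :
    ∀ s ∈ Icc (-r) r, x s = X s := by
  have hdiff : ∀ k : ℕ, k < 4 → Differentiable ℝ (iteratedDeriv k x) := fun k hk =>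
    hx.differentiable_iteratedDeriv k (by exact_mod_cast hk)
  have hder : ∀ k : ℕ, k < 4 → ∀ s : ℝ,
      HasDerivAt (iteratedDeriv k x) (iteratedDeriv (k+1) x s) s := by
    intro k hk s
    rw [iteratedDeriv_succ]
    exact (hdiff k hk s).hasDerivAt
  set f : ℝ → ℝ×ℝ×ℝ×ℝ := fun s =>
    (x s, iteratedDeriv 1 x s, iteratedDeriv 2 x s, iteratedDeriv 3 x s) with hf_def
  set g : ℝ → ℝ×ℝ×ℝ×ℝ := fun s => (X s, X1 s, X2 s, X3 s) with hg_def
  have hXc : Continuous X := continuous_iff_continuousAt.2 fun s => (hX1 s).continuousAt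
  have hX1c : Continuous X1 := continuous_iff_continuousAt.2 fun s => (hX2 s).continuousAt
  have hX2c : Continuous X2 := continuous_iff_continuousAt.2 fun s => (hX3 s).continuousAt
  have hX3c : Continuous X3 := continuous_iff_continuousAt.2 fun s => (hX4 s).continuousAt
  have key : EqOn f g (Icc (-r) r) := by
    apply ODE_solution_unique (v := fun _ u => odeL α β u) (K := ‖odeL α β‖₊)
      (fun _ => (odeL α β).lipschitz)
    · apply ContinuousOn.prodMk (hx.continuous.continuousOn)
      apply ContinuousOn.prodMk ((hdiff 1 (by norm_num)).continuous.continuousOn)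
      exact ContinuousOn.prodMk ((hdiff 2 (by norm_num)).continuous.continuousOn)
        ((hdiff 3 (by norm_num)).continuous.continuousOn)
    · intro t ht
      have ht' : t ∈ Icc (-r) r := Ico_subset_Icc_self ht
      have h4 : iteratedDeriv 4 x t = -(α * iteratedDeriv 2 x t) - β * x t := by
        have := hode t ht'; linarith
      have hD : HasDerivAt f (iteratedDeriv 1 x t, iteratedDeriv 2 x t,
          iteratedDeriv 3 x t, iteratedDeriv 4 x t) t := by
        have h0' : HasDerivAt x (iteratedDeriv 1 x t) t := by
          have := hder 0 (by norm_num) t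
          simpa [iteratedDeriv_zero] using this
        exact h0'.prodMk ((hder 1 (by norm_num) t).prodMk
          ((hder 2 (by norm_num) t).prodMk (hder 3 (by norm_num) t)))
      have heq : (odeL α β) (f t) = (iteratedDeriv 1 x t, iteratedDeriv 2 x t,
          iteratedDeriv 3 x t, iteratedDeriv 4 x t) := by
        simp [odeL, hf_def, LinearMap.toContinuousLinearMap, h4]
      rw [heq]
      exact hD.hasDerivWithinAt
    · exact (hXc.prodMk (hX1c.prodMk (hX2c.prodMk hX3c))).continuousOn
    · intro t ht
      have hD : HasDerivAt g (X1 t, X2 t, X3 t, -(α * X2 t) - β * X t) t :=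
        (hX1 t).prodMk ((hX2 t).prodMk ((hX3 t).prodMk (hX4 t)))
      have heq : (odeL α β) (g t) = (X1 t, X2 t, X3 t, -(α * X2 t) - β * X t) := by
        simp [odeL, hg_def, LinearMap.toContinuousLinearMap]
      rw [heq]
      exact hD.hasDerivWithinAt
    · simp only [hf_def, hg_def]
      rw [h0, h1, h2, h3]
  intro s hs
  exact congrArg Prod.fst (key hs)

/-- If `(α,β)` lies on exactly one ray `l_m`, then every solution of the linear
boundary value problem is a scalar multiple of `e_m(s) = 2·cos(ω_m(s+r))`. -/
theorem stmt_2 (r : ℝ) (hr : 0 < r)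
    (c : ℕ → ℝ)
    (hc : ∀ k : ℕ, c k = -(π / r) ^ 2 * ((2 * (k : ℝ) - 1) / 4) ^ 2)
    (α β : ℝ) (hα : 0 < α) (hβ : 0 < β)
    (m : ℕ) (hm : 1 ≤ m) (hray : β = -(c m) * α - (c m) ^ 2)
    (huniq : ∀ k : ℕ, 1 ≤ k → β = -(c k) * α - (c k) ^ 2 → k = m)
    (ω : ℝ) (hω : ω = ((2 * (m : ℝ) - 1) * π) / (4 * r))
    (x : ℝ → ℝ) (hx : ContDiff ℝ 4 x)
    (hode : ∀ s ∈ Icc (-r) r,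
      iteratedDeriv 4 x s + α * iteratedDeriv 2 x s + β * x s = 0)
    (hbc1 : iteratedDeriv 1 x (-r) = 0) (hbc2 : iteratedDeriv 3 x (-r) = 0)
    (hbc3 : x r = 0) (hbc4 : iteratedDeriv 2 x r = 0) :
    ∃ a : ℝ, ∀ s ∈ Icc (-r) r, x s = a * (2 * Real.cos (ω * (s + r))) := by
  have hπ := Real.pi_pos
  have hrne : r ≠ 0 := hr.ne'
  have hm1 : (1:ℝ) ≤ (m:ℝ) := by exact_mod_cast hm
  have hω0 : 0 < ω := by
    rw [hω]; apply div_pos (by nlinarith) (by linarith)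
  have hcm : c m = -ω^2 := by rw [hc, hω]; field_simp
  have hβ' : β = ω^2 * α - ω^4 := by rw [hray, hcm]; ring
  have hb0 : 0 < α - ω^2 := by
    have h2 := pow_pos hω0 2
    nlinarith
  obtain ⟨n, hn⟩ : ∃ n : ℕ, (m:ℝ) = n + 1 := by
    refine ⟨m - 1, ?_⟩
    have : m - 1 + 1 = m := Nat.succ_pred_eq_of_pos hm
    exact_mod_cast this.symm
  have hθ : ω * (r + r) = n * π + π / 2 := by rw [hω, hn]; field_simp; ring
  have hcosθ : Real.cos (ω*(r+r)) = 0 := by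
    rw [hθ, Real.cos_add, Real.cos_pi_div_two, Real.sin_pi_div_two, Real.sin_nat_mul_pi]
    ring
  have hsinθ : Real.sin (ω*(r+r)) ≠ 0 := by
    have h1 := Real.sin_sq_add_cos_sq (ω*(r+r))
    rw [hcosθ] at h1
    intro h; rw [h] at h1; norm_num at h1
  have hrIcc : r ∈ Icc (-r) r := ⟨by linarith, le_rfl⟩
  by_cases hres : α - ω^2 = ω^2
  · -- resonant case: α = 2ω², β = ω⁴
    have hα2 : α = 2*ω^2 := by linarith
    have hβ4 : β = ω^4 := by rw [hβ', hα2]; ring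
    set P := x (-r) with hP
    set Q := (iteratedDeriv 2 x (-r) + ω^2 * x (-r)) / (2*ω) with hQdef
    have hsol := uniq4 hx hode
      (fun s => P * Real.cos (ω*(s+r)) + Q * ((s+r) * Real.sin (ω*(s+r))))
      (fun s => -(P*ω) * Real.sin (ω*(s+r))
        + Q * (Real.sin (ω*(s+r)) + ω*((s+r)*Real.cos (ω*(s+r)))))
      (fun s => -(P*ω^2) * Real.cos (ω*(s+r))
        + Q * (2*ω*Real.cos (ω*(s+r)) - ω^2*((s+r)*Real.sin (ω*(s+r)))))
      (fun s => P*ω^3 * Real.sin (ω*(s+r))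
        + Q * (-(3*ω^2)*Real.sin (ω*(s+r)) - ω^3*((s+r)*Real.cos (ω*(s+r)))))
      ?_ ?_ ?_ ?_ ?_ ?_ ?_ ?_
    · refine ⟨P/2, fun s hs => ?_⟩
      have hQ0 : Q = 0 := by
        have hXr := hsol r hrIcc
        rw [hbc3] at hXr
        simp only [hcosθ, mul_zero, zero_add] at hXr
        have h2r : (r + r) * Real.sin (ω*(r+r)) ≠ 0 :=
          mul_ne_zero (by linarith) hsinθ
        rcases mul_eq_zero.1 hXr.symm with h | h
        · exact h
        · exact absurd h h2r
      rw [hsol s hs, hQ0]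
      ring
    · intro s
      have hid : HasDerivAt (fun s : ℝ => s + r) 1 s := (hasDerivAt_id s).add_const r
      have d1 : HasDerivAt (fun s : ℝ => ω*(s+r)) ω s := by simpa using hid.const_mul ω
      have := (d1.cos.const_mul P).add ((hid.mul d1.sin).const_mul Q)
      refine this.congr_deriv ?_
      try simp only [id_eq]
      ring
    · intro s
      have hid : HasDerivAt (fun s : ℝ => s + r) 1 s := (hasDerivAt_id s).add_const r
      have d1 : HasDerivAt (fun s : ℝ => ω*(s+r)) ω s := by simpa using hid.const_mul ω
      have := (d1.sin.const_mul (-(P*ω))).add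
        ((d1.sin.add ((hid.mul d1.cos).const_mul ω)).const_mul Q)
      refine this.congr_deriv ?_
      try simp only [id_eq]
      ring
    · intro s
      have hid : HasDerivAt (fun s : ℝ => s + r) 1 s := (hasDerivAt_id s).add_const r
      have d1 : HasDerivAt (fun s : ℝ => ω*(s+r)) ω s := by simpa using hid.const_mul ω
      have := (d1.cos.const_mul (-(P*ω^2))).add
        (((d1.cos.const_mul (2*ω)).sub ((hid.mul d1.sin).const_mul (ω^2))).const_mul Q)
      refine this.congr_deriv ?_
      try simp only [id_eq]
      ring
    · intro s
      have hid : HasDerivAt (fun s : ℝ => s + r) 1 s := (hasDerivAt_id s).add_const r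
      have d1 : HasDerivAt (fun s : ℝ => ω*(s+r)) ω s := by simpa using hid.const_mul ω
      have := (d1.sin.const_mul (P*ω^3)).add
        (((d1.sin.const_mul (-(3*ω^2))).sub ((hid.mul d1.cos).const_mul (ω^3))).const_mul Q)
      refine this.congr_deriv ?_
      rw [hα2, hβ4]
      try simp only [id_eq]
      ring
    · beta_reduce
      rw [show ω*(-r+r) = (0:ℝ) by ring]
      simp [hP]
    · rw [hbc1]
      try beta_reduce
      rw [show ω*(-r+r) = (0:ℝ) by ring]
      simp
    · beta_reduce
      rw [show ω*(-r+r) = (0:ℝ) by ring, hQdef]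
      have hωne : ω ≠ 0 := hω0.ne'
      simp
      field_simp
      ring
    · rw [hbc2]
      try beta_reduce
      rw [show ω*(-r+r) = (0:ℝ) by ring]
      simp
  · -- non-resonant case
    set μ := Real.sqrt (α - ω^2) with hμdef
    have hμ0 : 0 < μ := Real.sqrt_pos.2 hb0
    have hμ2 : μ^2 = α - ω^2 := Real.sq_sqrt hb0.le
    have hαμ : α = ω^2 + μ^2 := by linarith
    have hβμ : β = ω^2 * μ^2 := by rw [hβ', hαμ]; ring
    have hμωne : μ^2 - ω^2 ≠ 0 := fun h => hres (by linarith)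
    have hcosμ : Real.cos (μ*(r+r)) ≠ 0 := by
      intro h
      rw [Real.cos_eq_zero_iff] at h
      obtain ⟨k, hk⟩ := h
      have hk0 : 0 ≤ k := by
        by_contra hneg
        push_neg at hneg
        have hk1 : k ≤ -1 := by omega
        have hkr : (k:ℝ) ≤ -1 := by exact_mod_cast hk1
        nlinarith [mul_pos hμ0 (by linarith : (0:ℝ) < r + r)]
      lift k to ℕ using hk0
      have hμval : μ = ((2*(k:ℝ)+1)*π/2)/(r+r) := by
        rw [eq_div_iff (by positivity : r + r ≠ 0)]
        exact_mod_cast hk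
      have hck : c (k+1) = -μ^2 := by
        rw [hc, hμval]; push_cast; field_simp; ring
      have hkm : k + 1 = m := by
        apply huniq (k+1) (Nat.le_add_left 1 k)
        rw [hck, hβμ, hαμ]
        ring
      have hμω : μ = ω := by
        rw [hω, hμval, ← hkm]
        push_cast
        field_simp
        ring
      apply hres
      rw [← hμ2, hμω]
    set P := (μ^2 * x (-r) + iteratedDeriv 2 x (-r))/(μ^2 - ω^2) with hPdef
    set Q := -((ω^2 * x (-r) + iteratedDeriv 2 x (-r))/(μ^2 - ω^2)) with hQdef
    have hsol := uniq4 hx hode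
      (fun s => P * Real.cos (ω*(s+r)) + Q * Real.cos (μ*(s+r)))
      (fun s => -(P*ω) * Real.sin (ω*(s+r)) + -(Q*μ) * Real.sin (μ*(s+r)))
      (fun s => -(P*ω^2) * Real.cos (ω*(s+r)) + -(Q*μ^2) * Real.cos (μ*(s+r)))
      (fun s => P*ω^3 * Real.sin (ω*(s+r)) + Q*μ^3 * Real.sin (μ*(s+r)))
      ?_ ?_ ?_ ?_ ?_ ?_ ?_ ?_
    · refine ⟨P/2, fun s hs => ?_⟩
      have hQ0 : Q = 0 := by
        have hXr := hsol r hrIcc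
        rw [hbc3] at hXr
        simp only [hcosθ, mul_zero, zero_add] at hXr
        rcases mul_eq_zero.1 hXr.symm with h | h
        · exact h
        · exact absurd h hcosμ
      rw [hsol s hs, hQ0]
      ring
    · intro s
      have hid : HasDerivAt (fun s : ℝ => s + r) 1 s := (hasDerivAt_id s).add_const r
      have d1 : HasDerivAt (fun s : ℝ => ω*(s+r)) ω s := by simpa using hid.const_mul ω
      have d2 : HasDerivAt (fun s : ℝ => μ*(s+r)) μ s := by simpa using hid.const_mul μ
      have := (d1.cos.const_mul P).add (d2.cos.const_mul Q)
      refine this.congr_deriv ?_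
      ring
    · intro s
      have hid : HasDerivAt (fun s : ℝ => s + r) 1 s := (hasDerivAt_id s).add_const r
      have d1 : HasDerivAt (fun s : ℝ => ω*(s+r)) ω s := by simpa using hid.const_mul ω
      have d2 : HasDerivAt (fun s : ℝ => μ*(s+r)) μ s := by simpa using hid.const_mul μ
      have := (d1.sin.const_mul (-(P*ω))).add (d2.sin.const_mul (-(Q*μ)))
      refine this.congr_deriv ?_
      ring
    · intro s
      have hid : HasDerivAt (fun s : ℝ => s + r) 1 s := (hasDerivAt_id s).add_const r
      have d1 : HasDerivAt (fun s : ℝ => ω*(s+r)) ω s := by simpa using hid.const_mul ω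
      have d2 : HasDerivAt (fun s : ℝ => μ*(s+r)) μ s := by simpa using hid.const_mul μ
      have := (d1.cos.const_mul (-(P*ω^2))).add (d2.cos.const_mul (-(Q*μ^2)))
      refine this.congr_deriv ?_
      ring
    · intro s
      have hid : HasDerivAt (fun s : ℝ => s + r) 1 s := (hasDerivAt_id s).add_const r
      have d1 : HasDerivAt (fun s : ℝ => ω*(s+r)) ω s := by simpa using hid.const_mul ω
      have d2 : HasDerivAt (fun s : ℝ => μ*(s+r)) μ s := by simpa using hid.const_mul μ
      have := (d1.sin.const_mul (P*ω^3)).add (d2.sin.const_mul (Q*μ^3))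
      refine this.congr_deriv ?_
      rw [hαμ, hβμ]
      ring
    · beta_reduce
      rw [show ω*(-r+r) = (0:ℝ) by ring, show μ*(-r+r) = (0:ℝ) by ring, hPdef, hQdef]
      simp
      field_simp
      ring
    · rw [hbc1]
      try beta_reduce
      rw [show ω*(-r+r) = (0:ℝ) by ring, show μ*(-r+r) = (0:ℝ) by ring]
      simp
    · beta_reduce
      rw [show ω*(-r+r) = (0:ℝ) by ring, show μ*(-r+r) = (0:ℝ) by ring, hPdef, hQdef]
      simp
      field_simp
      ring
    · rw [hbc2]
      try beta_reduce
      rw [show ω*(-r+r) = (0:ℝ) by ring, show μ*(-r+r) = (0:ℝ) by ring]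
      simp
end

section
/- Let r>0 and α, β, γ be real numbers. Let x and h be four times continuously differentiable real functions on [-r,r], both satisfying the boundary conditions x'(-r) = x'''(-r) = 0, x(r) = x''(r) = 0 and h'(-r) = h'''(-r) = 0, h(r) = h''(r) = 0. Then ∫_{-r}^{r} (β·x(s) - γ·x(s)^3)·h(s) ds - ∫_{-r}^{r} (α·x'(s) + (α/2)·x'(s)^3 + 3·x'(s)·x''(s)^2)·h'(s) ds + ∫_{-r}^{r} (x''(s) - 3·x'(s)^2·x''(s))·h''(s) ds = ∫_{-r}^{r} F(x)(s)·h(s) ds, where F(x) = x'''' + α·x'' + β·x - γ·x^3 - 3·(x'')^3 - 12·x'·x''·x''' - 3·(x')^2·(x'''' - (α/2)·x''). -/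
open Real Set intervalIntegral

/-- The integration-by-parts identity relating the derivative of the energy
functional to the variational gradient `F`. -/
theorem stmt_6 (r : ℝ) (hr : 0 < r) (α β γ : ℝ)
    (x h : ℝ → ℝ) (hx : ContDiff ℝ 4 x) (hh : ContDiff ℝ 4 h)
    (xbc1 : iteratedDeriv 1 x (-r) = 0) (xbc2 : iteratedDeriv 3 x (-r) = 0)
    (xbc3 : x r = 0) (xbc4 : iteratedDeriv 2 x r = 0)
    (hbc1 : iteratedDeriv 1 h (-r) = 0) (hbc2 : iteratedDeriv 3 h (-r) = 0)
    (hbc3 : h r = 0) (hbc4 : iteratedDeriv 2 h r = 0)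
    (F : ℝ → ℝ)
    (hF : F = fun s =>
      iteratedDeriv 4 x s + α * iteratedDeriv 2 x s + β * x s
        - γ * (x s) ^ 3 - 3 * (iteratedDeriv 2 x s) ^ 3
        - 12 * iteratedDeriv 1 x s * iteratedDeriv 2 x s * iteratedDeriv 3 x s
        - 3 * (iteratedDeriv 1 x s) ^ 2 *
            (iteratedDeriv 4 x s - (α / 2) * iteratedDeriv 2 x s)) :
    (∫ s in (-r)..r, (β * x s - γ * (x s) ^ 3) * h s)
      - (∫ s in (-r)..r,
          (α * iteratedDeriv 1 x s + (α / 2) * (iteratedDeriv 1 x s) ^ 3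
            + 3 * iteratedDeriv 1 x s * (iteratedDeriv 2 x s) ^ 2) * iteratedDeriv 1 h s)
      + (∫ s in (-r)..r,
          (iteratedDeriv 2 x s - 3 * (iteratedDeriv 1 x s) ^ 2 * iteratedDeriv 2 x s)
            * iteratedDeriv 2 h s)
    = ∫ s in (-r)..r, F s * h s := by
  -- derivative facts
  have dX : ∀ n : ℕ, n < 4 → ∀ t : ℝ, HasDerivAt (iteratedDeriv n x) (iteratedDeriv (n+1) x t) t := by
    intro n hn t
    have h1 : DifferentiableAt ℝ (iteratedDeriv n x) t :=
      (hx.differentiable_iteratedDeriv n (by exact_mod_cast hn)).differentiableAt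
    rw [iteratedDeriv_succ]; exact h1.hasDerivAt
  have dH : ∀ n : ℕ, n < 4 → ∀ t : ℝ, HasDerivAt (iteratedDeriv n h) (iteratedDeriv (n+1) h t) t := by
    intro n hn t
    have h1 : DifferentiableAt ℝ (iteratedDeriv n h) t :=
      (hh.differentiable_iteratedDeriv n (by exact_mod_cast hn)).differentiableAt
    rw [iteratedDeriv_succ]; exact h1.hasDerivAt
  have cX : ∀ n : ℕ, n ≤ 4 → Continuous (iteratedDeriv n x) :=
    fun n hn => hx.continuous_iteratedDeriv n (by exact_mod_cast hn)
  have cH : ∀ n : ℕ, n ≤ 4 → Continuous (iteratedDeriv n h) :=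
    fun n hn => hh.continuous_iteratedDeriv n (by exact_mod_cast hn)
  have cx0 : Continuous x := hx.continuous
  have cx1 := cX 1 (by norm_num); have cx2 := cX 2 (by norm_num)
  have cx3 := cX 3 (by norm_num); have cx4 := cX 4 (by norm_num)
  have ch0 : Continuous h := hh.continuous
  have ch1 := cH 1 (by norm_num); have ch2 := cH 2 (by norm_num)
  -- the derivative of G
  have hG : ∀ t : ℝ, HasDerivAt
      (fun s => α * iteratedDeriv 1 x s + α / 2 * (iteratedDeriv 1 x s) ^ 3
        + 3 * iteratedDeriv 1 x s * (iteratedDeriv 2 x s) ^ 2)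
      (α * iteratedDeriv 2 x t + 3 * α / 2 * (iteratedDeriv 1 x t) ^ 2 * iteratedDeriv 2 x t
        + 3 * (iteratedDeriv 2 x t) ^ 3
        + 6 * iteratedDeriv 1 x t * iteratedDeriv 2 x t * iteratedDeriv 3 x t) t := by
    intro t
    have d1 := dX 1 (by norm_num) t
    have d2 := dX 2 (by norm_num) t
    have := ((d1.const_mul α).add ((d1.pow 3).const_mul (α/2))).add
      ((d1.const_mul 3).mul (d2.pow 2))
    exact this.congr_deriv (by simp only [Pi.pow_apply]; ring)
  -- the derivative of K
  have hK : ∀ t : ℝ, HasDerivAt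
      (fun s => iteratedDeriv 2 x s - 3 * (iteratedDeriv 1 x s) ^ 2 * iteratedDeriv 2 x s)
      (iteratedDeriv 3 x t - 6 * iteratedDeriv 1 x t * (iteratedDeriv 2 x t) ^ 2
        - 3 * (iteratedDeriv 1 x t) ^ 2 * iteratedDeriv 3 x t) t := by
    intro t
    have d1 := dX 1 (by norm_num) t
    have d2 := dX 2 (by norm_num) t
    have d3 := dX 3 (by norm_num) t
    have := d2.sub (((d1.pow 2).const_mul 3).mul d2)
    exact this.congr_deriv (by simp only [Pi.pow_apply]; ring)
  -- the derivative of K'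
  have hK' : ∀ t : ℝ, HasDerivAt
      (fun s => iteratedDeriv 3 x s - 6 * iteratedDeriv 1 x s * (iteratedDeriv 2 x s) ^ 2
        - 3 * (iteratedDeriv 1 x s) ^ 2 * iteratedDeriv 3 x s)
      (iteratedDeriv 4 x t - 6 * (iteratedDeriv 2 x t) ^ 3
        - 18 * iteratedDeriv 1 x t * iteratedDeriv 2 x t * iteratedDeriv 3 x t
        - 3 * (iteratedDeriv 1 x t) ^ 2 * iteratedDeriv 4 x t) t := by
    intro t
    have d1 := dX 1 (by norm_num) t
    have d2 := dX 2 (by norm_num) t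
    have d3 := dX 3 (by norm_num) t
    have := (d3.sub ((d1.const_mul 6).mul (d2.pow 2))).sub
      (((d1.pow 2).const_mul 3).mul d3)
    exact this.congr_deriv (by simp only [Pi.pow_apply]; ring)
  -- h as derivative
  have dh0 : ∀ t : ℝ, HasDerivAt h (iteratedDeriv 1 h t) t := by
    intro t
    have := dH 0 (by norm_num) t
    simpa [iteratedDeriv_zero] using this
  -- integrability
  have iG' : IntervalIntegrable (fun s => (α * iteratedDeriv 2 x s
      + 3 * α / 2 * (iteratedDeriv 1 x s) ^ 2 * iteratedDeriv 2 x s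
      + 3 * (iteratedDeriv 2 x s) ^ 3
      + 6 * iteratedDeriv 1 x s * iteratedDeriv 2 x s * iteratedDeriv 3 x s))
      MeasureTheory.volume (-r) r := (by fun_prop : Continuous _).intervalIntegrable _ _
  have iK' : IntervalIntegrable (fun s => iteratedDeriv 3 x s
      - 6 * iteratedDeriv 1 x s * (iteratedDeriv 2 x s) ^ 2
      - 3 * (iteratedDeriv 1 x s) ^ 2 * iteratedDeriv 3 x s)
      MeasureTheory.volume (-r) r := (by fun_prop : Continuous _).intervalIntegrable _ _
  have iK'' : IntervalIntegrable (fun s => iteratedDeriv 4 x s - 6 * (iteratedDeriv 2 x s) ^ 3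
      - 18 * iteratedDeriv 1 x s * iteratedDeriv 2 x s * iteratedDeriv 3 x s
      - 3 * (iteratedDeriv 1 x s) ^ 2 * iteratedDeriv 4 x s)
      MeasureTheory.volume (-r) r := (by fun_prop : Continuous _).intervalIntegrable _ _
  have ih1 : IntervalIntegrable (iteratedDeriv 1 h) MeasureTheory.volume (-r) r :=
    ch1.intervalIntegrable _ _
  have ih2 : IntervalIntegrable (iteratedDeriv 2 h) MeasureTheory.volume (-r) r :=
    ch2.intervalIntegrable _ _
  -- IBP for the G term
  have eqB : (∫ s in (-r)..r,
      (α * iteratedDeriv 1 x s + (α / 2) * (iteratedDeriv 1 x s) ^ 3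
        + 3 * iteratedDeriv 1 x s * (iteratedDeriv 2 x s) ^ 2) * iteratedDeriv 1 h s)
      = -(∫ s in (-r)..r, (α * iteratedDeriv 2 x s
          + 3 * α / 2 * (iteratedDeriv 1 x s) ^ 2 * iteratedDeriv 2 x s
          + 3 * (iteratedDeriv 2 x s) ^ 3
          + 6 * iteratedDeriv 1 x s * iteratedDeriv 2 x s * iteratedDeriv 3 x s) * h s) := by
    rw [integral_mul_deriv_eq_deriv_mul (fun t _ => hG t) (fun t _ => dh0 t) iG' ih1]
    simp [xbc1, hbc3]
  -- IBP step 1 for the K term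
  have eqC1 : (∫ s in (-r)..r,
      (iteratedDeriv 2 x s - 3 * (iteratedDeriv 1 x s) ^ 2 * iteratedDeriv 2 x s)
        * iteratedDeriv 2 h s)
      = -(∫ s in (-r)..r, (iteratedDeriv 3 x s
          - 6 * iteratedDeriv 1 x s * (iteratedDeriv 2 x s) ^ 2
          - 3 * (iteratedDeriv 1 x s) ^ 2 * iteratedDeriv 3 x s) * iteratedDeriv 1 h s) := by
    rw [integral_mul_deriv_eq_deriv_mul (fun t _ => hK t) (fun t _ => dH 1 (by norm_num) t)
      iK' ih2]
    simp [xbc4, hbc1]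
  -- IBP step 2 for the K term
  have eqC2 : (∫ s in (-r)..r, (iteratedDeriv 3 x s
      - 6 * iteratedDeriv 1 x s * (iteratedDeriv 2 x s) ^ 2
      - 3 * (iteratedDeriv 1 x s) ^ 2 * iteratedDeriv 3 x s) * iteratedDeriv 1 h s)
      = -(∫ s in (-r)..r, (iteratedDeriv 4 x s - 6 * (iteratedDeriv 2 x s) ^ 3
          - 18 * iteratedDeriv 1 x s * iteratedDeriv 2 x s * iteratedDeriv 3 x s
          - 3 * (iteratedDeriv 1 x s) ^ 2 * iteratedDeriv 4 x s) * h s) := by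
    rw [integral_mul_deriv_eq_deriv_mul (fun t _ => hK' t) (fun t _ => dh0 t) iK'' ih1]
    simp [xbc1, xbc2, hbc3]
  rw [eqB, eqC1, eqC2]
  have iA : IntervalIntegrable (fun s => (β * x s - γ * (x s) ^ 3) * h s)
      MeasureTheory.volume (-r) r := (by fun_prop : Continuous _).intervalIntegrable _ _
  have iGh : IntervalIntegrable (fun s => (α * iteratedDeriv 2 x s
      + 3 * α / 2 * (iteratedDeriv 1 x s) ^ 2 * iteratedDeriv 2 x s
      + 3 * (iteratedDeriv 2 x s) ^ 3
      + 6 * iteratedDeriv 1 x s * iteratedDeriv 2 x s * iteratedDeriv 3 x s) * h s)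
      MeasureTheory.volume (-r) r := (by fun_prop : Continuous _).intervalIntegrable _ _
  have iKh : IntervalIntegrable (fun s => (iteratedDeriv 4 x s - 6 * (iteratedDeriv 2 x s) ^ 3
      - 18 * iteratedDeriv 1 x s * iteratedDeriv 2 x s * iteratedDeriv 3 x s
      - 3 * (iteratedDeriv 1 x s) ^ 2 * iteratedDeriv 4 x s) * h s)
      MeasureTheory.volume (-r) r := (by fun_prop : Continuous _).intervalIntegrable _ _
  rw [sub_neg_eq_add, neg_neg, ← integral_add iA iGh, ← integral_add (iA.add iGh) iKh]
  apply integral_congr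
  intro s _
  simp only [hF]
  ring
end

section
/- Let r>0, let m≥1 be an integer, set c_m = -(π/r)^2·((2m-1)/4)^2, ω_m = ((2m-1)π)/(4r), e_m(s) = 2·cos(ω_m(s+r)), and let α_0>0, β_0>0 satisfy β_0 = -c_m·α_0 - c_m^2 while β_0 ≠ -c_k·α_0 - c_k^2 for every integer k≥1 with k ≠ m. Then for a continuous real function y on [-r,r] the following are equivalent: (i) there exists a four times continuously differentiable function x on [-r,r] with x'''' + α_0·x'' + β_0·x = y on [-r,r], x'(-r) = x'''(-r) = 0 and x(r) = x''(r) = 0; (ii) ∫_{-r}^{r} y(s)·e_m(s) ds = 0. (The range of the linearization at a simple point is the orthogonal complement of its one-dimensional kernel.) -/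
open Real Set intervalIntegral

private lemma ftc' (f : ℝ → ℝ) (hf : Continuous f) (a b : ℝ) :
    HasDerivAt (fun u => ∫ t in a..u, f t) (f b) b :=
  (hf.integral_hasStrictDerivAt a b).hasDerivAt

private lemma chain4 {x p q w v : ℝ → ℝ}
    (h1 : ∀ s, HasDerivAt x (p s) s) (h2 : ∀ s, HasDerivAt p (q s) s)
    (h3 : ∀ s, HasDerivAt q (w s) s) (h4 : ∀ s, HasDerivAt w (v s) s)
    (hv : Continuous v) :
    ContDiff ℝ 4 x ∧ iteratedDeriv 1 x = p ∧ iteratedDeriv 2 x = q ∧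
      iteratedDeriv 3 x = w ∧ iteratedDeriv 4 x = v := by
  have e1 : iteratedDeriv 1 x = p := by
    rw [iteratedDeriv_one]; funext s; exact (h1 s).deriv
  have e2 : iteratedDeriv 2 x = q := by
    rw [show (2:ℕ) = 1 + 1 from rfl, iteratedDeriv_succ, e1]
    funext s; exact (h2 s).deriv
  have e3 : iteratedDeriv 3 x = w := by
    rw [show (3:ℕ) = 2 + 1 from rfl, iteratedDeriv_succ, e2]
    funext s; exact (h3 s).deriv
  have e4 : iteratedDeriv 4 x = v := by
    rw [show (4:ℕ) = 3 + 1 from rfl, iteratedDeriv_succ, e3]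
    funext s; exact (h4 s).deriv
  refine ⟨?_, e1, e2, e3, e4⟩
  have dx : Differentiable ℝ x := fun s => (h1 s).differentiableAt
  have dp : Differentiable ℝ p := fun s => (h2 s).differentiableAt
  have dq : Differentiable ℝ q := fun s => (h3 s).differentiableAt
  have dw : Differentiable ℝ w := fun s => (h4 s).differentiableAt
  have : ContDiff ℝ (4:ℕ) x := by
    rw [contDiff_nat_iff_iteratedDeriv]
    constructor
    · intro m hm
      interval_cases m
      · exact dx.continuous
      · rw [e1]; exact dp.continuous
      · rw [e2]; exact dq.continuous
      · rw [e3]; exact dw.continuous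
      · rw [e4]; exact hv
    · intro m hm
      interval_cases m
      · exact dx
      · rw [e1]; exact dp
      · rw [e2]; exact dq
      · rw [e3]; exact dw
  exact_mod_cast this

private lemma solve2 (ν a A : ℝ) (hν : ν ≠ 0) (f : ℝ → ℝ) (hf : Continuous f) :
    ∃ x p : ℝ → ℝ,
      (∀ s, HasDerivAt x (p s) s) ∧
      (∀ s, HasDerivAt p (f s - ν ^ 2 * x s) s) ∧
      p a = 0 ∧
      (∀ b, x b =
        ν⁻¹ * (∫ t in a..b, Real.sin (ν * (b - t)) * f t) + A * Real.cos (ν * (b - a))) := by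
  set F : ℝ → ℝ := fun b => ∫ t in a..b, Real.cos (ν * t) * f t with hF
  set G : ℝ → ℝ := fun b => ∫ t in a..b, Real.sin (ν * t) * f t with hG
  have hcf : Continuous fun t => Real.cos (ν * t) * f t :=
    ((Real.continuous_cos.comp (continuous_const.mul continuous_id)).mul hf)
  have hsf : Continuous fun t => Real.sin (ν * t) * f t :=
    ((Real.continuous_sin.comp (continuous_const.mul continuous_id)).mul hf)
  have hF' : ∀ b, HasDerivAt F (Real.cos (ν * b) * f b) b := fun b => ftc' _ hcf a b
  have hG' : ∀ b, HasDerivAt G (Real.sin (ν * b) * f b) b := fun b => ftc' _ hsf a b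
  refine ⟨fun s => ν⁻¹ * (Real.sin (ν * s) * F s - Real.cos (ν * s) * G s)
      + A * Real.cos (ν * (s - a)),
    fun s => Real.cos (ν * s) * F s + Real.sin (ν * s) * G s
      - A * ν * Real.sin (ν * (s - a)), ?_, ?_, ?_, ?_⟩
  · intro s
    have hsin : HasDerivAt (fun s => Real.sin (ν * s)) (Real.cos (ν * s) * ν) s :=
      (Real.hasDerivAt_sin (ν * s)).comp s (by simpa using (hasDerivAt_id s).const_mul ν)
    have hcos : HasDerivAt (fun s => Real.cos (ν * s)) (-Real.sin (ν * s) * ν) s :=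
      (Real.hasDerivAt_cos (ν * s)).comp s (by simpa using (hasDerivAt_id s).const_mul ν)
    have hcos2 : HasDerivAt (fun s => Real.cos (ν * (s - a)))
        (-Real.sin (ν * (s - a)) * ν) s := by
      have h0 : HasDerivAt (fun s : ℝ => ν * (s - a)) ν s := by
        simpa using ((hasDerivAt_id s).sub_const a).const_mul ν
      exact (Real.hasDerivAt_cos (ν * (s - a))).comp s h0
    have := (((hsin.mul (hF' s)).sub (hcos.mul (hG' s))).const_mul ν⁻¹).add
      (hcos2.const_mul A)
    refine this.congr_deriv ?_
    field_simp
    ring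
  · intro s
    have hsin : HasDerivAt (fun s => Real.sin (ν * s)) (Real.cos (ν * s) * ν) s :=
      (Real.hasDerivAt_sin (ν * s)).comp s (by simpa using (hasDerivAt_id s).const_mul ν)
    have hcos : HasDerivAt (fun s => Real.cos (ν * s)) (-Real.sin (ν * s) * ν) s :=
      (Real.hasDerivAt_cos (ν * s)).comp s (by simpa using (hasDerivAt_id s).const_mul ν)
    have hsin2 : HasDerivAt (fun s => Real.sin (ν * (s - a)))
        (Real.cos (ν * (s - a)) * ν) s := by
      have h0 : HasDerivAt (fun s : ℝ => ν * (s - a)) ν s := by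
        simpa using ((hasDerivAt_id s).sub_const a).const_mul ν
      exact (Real.hasDerivAt_sin (ν * (s - a))).comp s h0
    have := ((hcos.mul (hF' s)).add (hsin.mul (hG' s))).sub
      (hsin2.const_mul (A * ν))
    refine this.congr_deriv (Eq.symm ?_)
    have hpy := Real.sin_sq_add_cos_sq (ν * s)
    have hinv : ν ^ 2 * ν⁻¹ = ν := by field_simp
    linear_combination (-(f s)) * hpy
      - (Real.sin (ν * s) * F s - Real.cos (ν * s) * G s) * hinv
  · simp [hF, hG]
  · intro b
    have key : (∫ t in a..b, Real.sin (ν * (b - t)) * f t)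
        = Real.sin (ν * b) * F b - Real.cos (ν * b) * G b := by
      have h1 : ∀ t, Real.sin (ν * (b - t)) * f t
          = Real.sin (ν * b) * (Real.cos (ν * t) * f t)
            - Real.cos (ν * b) * (Real.sin (ν * t) * f t) := by
        intro t
        have h2 : ν * (b - t) = ν * b - ν * t := by ring
        rw [h2, Real.sin_sub]; ring
      simp_rw [h1]
      rw [intervalIntegral.integral_sub ((hcf.intervalIntegrable a b).const_mul _)
        ((hsf.intervalIntegrable a b).const_mul _),
        intervalIntegral.integral_const_mul, intervalIntegral.integral_const_mul]
    rw [key]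


/-- At a simple point `(α₀,β₀)` on exactly the ray `l_m`, the equation
`x'''' + α₀x'' + β₀x = y` with the boundary conditions is solvable iff `y ⟂ e_m`. -/
theorem stmt_11 (r : ℝ) (hr : 0 < r)
    (c : ℕ → ℝ)
    (hc : ∀ k : ℕ, c k = -(π / r) ^ 2 * ((2 * (k : ℝ) - 1) / 4) ^ 2)
    (m : ℕ) (hm : 1 ≤ m)
    (ω : ℝ) (hω : ω = ((2 * (m : ℝ) - 1) * π) / (4 * r))
    (e : ℝ → ℝ) (he : e = fun s => 2 * Real.cos (ω * (s + r)))
    (α₀ β₀ : ℝ) (hα₀ : 0 < α₀) (hβ₀ : 0 < β₀)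
    (hray : β₀ = -(c m) * α₀ - (c m) ^ 2)
    (hsimple : ∀ k : ℕ, 1 ≤ k → k ≠ m → β₀ ≠ -(c k) * α₀ - (c k) ^ 2)
    (y : ℝ → ℝ) (hy : ContinuousOn y (Icc (-r) r)) :
    (∃ x : ℝ → ℝ, ContDiff ℝ 4 x ∧
      iteratedDeriv 1 x (-r) = 0 ∧ iteratedDeriv 3 x (-r) = 0 ∧
      x r = 0 ∧ iteratedDeriv 2 x r = 0 ∧
      ∀ s ∈ Icc (-r) r,
        iteratedDeriv 4 x s + α₀ * iteratedDeriv 2 x s + β₀ * x s = y s) ↔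
    (∫ s in (-r)..r, y s * e s) = 0 := by
  have hπ := Real.pi_pos
  have hrr : (-r) ≤ r := by linarith
  have hm1 : (1:ℝ) ≤ (m:ℝ) := by exact_mod_cast hm
  have hω0 : 0 < ω := by
    rw [hω]; apply div_pos (mul_pos (by linarith) hπ) (by linarith)
  have hωne : ω ≠ 0 := ne_of_gt hω0
  have hrne : r ≠ 0 := ne_of_gt hr
  have hω2 : ω ^ 2 = -(c m) := by
    rw [hc, hω]; field_simp
  have h2ωr : ω * (r + r) = (m:ℝ) * π - π/2 := by
    rw [hω]; field_simp; ring
  have hcos0 : Real.cos (ω * (r + r)) = 0 := by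
    rw [h2ωr, show (m:ℝ) * π - π/2 = -(π/2 - (m:ℝ)*π) by ring, Real.cos_neg,
      Real.cos_pi_div_two_sub, Real.sin_nat_mul_pi]
  have her : e r = 0 := by rw [he]; simp [hcos0]
  have ce : Continuous e := by
    rw [he]
    exact continuous_const.mul (Real.continuous_cos.comp
      (continuous_const.mul (continuous_id.add continuous_const)))
  -- derivatives of e
  set E1 : ℝ → ℝ := fun s => -(2*ω) * Real.sin (ω * (s + r)) with hE1def
  have harg : ∀ s : ℝ, HasDerivAt (fun s : ℝ => ω * (s + r)) ω s := fun s => by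
    simpa using ((hasDerivAt_id s).add_const r).const_mul ω
  have hEd : ∀ s, HasDerivAt e (E1 s) s := by
    intro s
    rw [he]
    have := ((Real.hasDerivAt_cos (ω * (s + r))).comp s (harg s)).const_mul 2
    refine this.congr_deriv ?_
    simp [hE1def]; ring
  have hE1d : ∀ s, HasDerivAt E1 (-ω^2 * e s) s := by
    intro s
    have := ((Real.hasDerivAt_sin (ω * (s + r))).comp s (harg s)).const_mul (-(2*ω))
    refine this.congr_deriv ?_
    rw [he]; simp; ring
  have hE1r : E1 (-r) = 0 := by simp [hE1def]
  constructor
  · -- forward direction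
    rintro ⟨x, hx, hb1, hb3, hbr, hb2, heqn⟩
    have hd0 : ∀ s, HasDerivAt x (iteratedDeriv 1 x s) s := by
      intro s
      rw [iteratedDeriv_one]
      exact ((hx.differentiable (by norm_num)) s).hasDerivAt
    have hdi : ∀ i : ℕ, i < 4 →
        ∀ s, HasDerivAt (iteratedDeriv i x) (iteratedDeriv (i+1) x s) s := by
      intro i hi s
      rw [iteratedDeriv_succ]
      exact ((hx.differentiable_iteratedDeriv i (by exact_mod_cast hi)) s).hasDerivAt
    have hd1 := hdi 1 (by norm_num)
    have hd2 := hdi 2 (by norm_num)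
    have hd3 := hdi 3 (by norm_num)
    have hβω : β₀ = α₀ * ω^2 - ω^4 := by
      rw [hray]; linear_combination (ω^2 - c m - α₀) * hω2
    set W : ℝ → ℝ := fun s =>
      iteratedDeriv 3 x s * e s - iteratedDeriv 2 x s * E1 s
        + iteratedDeriv 1 x s * (-ω^2 * e s) - x s * (-ω^2 * E1 s)
        + α₀ * (iteratedDeriv 1 x s * e s - x s * E1 s) with hWdef
    have hW : ∀ s, HasDerivAt W
        ((iteratedDeriv 4 x s + α₀ * iteratedDeriv 2 x s + β₀ * x s) * e s) s := by
      intro s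
      have t1 := (hd3 s).mul (hEd s)
      have t2 := (hd2 s).mul (hE1d s)
      have t3 := (hd1 s).mul ((hEd s).const_mul (-ω^2))
      have t4 := (hd0 s).mul ((hE1d s).const_mul (-ω^2))
      have t5 := (((hd1 s).mul (hEd s)).sub ((hd0 s).mul (hE1d s))).const_mul α₀
      have h := (((t1.sub t2).add t3).sub t4).add t5
      refine h.congr_deriv (Eq.symm ?_)
      linear_combination (x s * e s) * hβω
    have cW : Continuous fun s =>
        (iteratedDeriv 4 x s + α₀ * iteratedDeriv 2 x s + β₀ * x s) * e s := by
      have c4 : Continuous (iteratedDeriv 4 x) := hx.continuous_iteratedDeriv 4 (by norm_num)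
      have c2 : Continuous (iteratedDeriv 2 x) := hx.continuous_iteratedDeriv 2 (by norm_num)
      exact ((c4.add (continuous_const.mul c2)).add
        (continuous_const.mul hx.continuous)).mul ce
    have hInt : (∫ s in (-r)..r,
        (iteratedDeriv 4 x s + α₀ * iteratedDeriv 2 x s + β₀ * x s) * e s)
        = W r - W (-r) :=
      intervalIntegral.integral_eq_sub_of_hasDerivAt (fun s _ => hW s)
        (cW.intervalIntegrable _ _)
    have hWr : W r = 0 := by
      simp [hWdef, her, hbr, hb2]
    have hWl : W (-r) = 0 := by
      have hb1' : deriv x (-r) = 0 := by rw [← iteratedDeriv_one]; exact hb1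
      simp [hWdef, hE1r, hb1, hb1', hb3]
    have hcongr : (∫ s in (-r)..r, y s * e s)
        = ∫ s in (-r)..r,
            (iteratedDeriv 4 x s + α₀ * iteratedDeriv 2 x s + β₀ * x s) * e s := by
      apply intervalIntegral.integral_congr
      intro s hs
      rw [uIcc_of_le hrr] at hs
      simp only
      rw [heqn s hs]
    rw [hcongr, hInt, hWr, hWl, sub_zero]
  · -- backward direction
    intro hint
    set Y : ℝ → ℝ := fun s => y (max (-r) (min r s)) with hYdef
    have hYc : Continuous Y := by
      apply hy.comp_continuous
        (continuous_const.max (continuous_const.min continuous_id))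
      intro s
      exact ⟨le_max_left _ _, max_le hrr (min_le_left _ _)⟩
    have hYeq : ∀ s ∈ Icc (-r) r, Y s = y s := by
      intro s hs
      simp only [hYdef]
      rw [min_eq_right hs.2, max_eq_right hs.1]
    have hintY : (∫ s in (-r)..r, Y s * e s) = 0 := by
      rw [← hint]
      apply intervalIntegral.integral_congr
      intro s hs
      rw [uIcc_of_le hrr] at hs
      simp only
      rw [hYeq s hs]
    -- key integral identity
    have key : ∀ f : ℝ → ℝ, Continuous f →
        (∫ t in (-r)..r, Real.sin (ω * (r - t)) * f t)
          = (Real.sin (ω*(r+r)) / 2) * ∫ t in (-r)..r, f t * e t := by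
      intro f hf
      rw [← intervalIntegral.integral_const_mul]
      apply intervalIntegral.integral_congr
      intro t ht
      simp only [he]
      have h1 : ω * (r - t) = ω * (r + r) - ω * (t + r) := by ring
      rw [h1, Real.sin_sub, hcos0]
      ring
    -- ∫ e² = 4r
    have hsin4 : Real.sin (2 * (ω * (r + r))) = 0 := by
      have h1 : 2 * (ω * (r + r)) = ((2*m-1 : ℕ) : ℝ) * π := by
        push_cast [Nat.cast_sub (by omega : 1 ≤ 2*m)]
        rw [hω]; field_simp; ring
      rw [h1, Real.sin_nat_mul_pi]
    have hee : (∫ s in (-r)..r, e s * e s) = 4 * r := by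
      have hder : ∀ s ∈ uIcc (-r) r, HasDerivAt
          (fun s => 2*(s+r) + Real.sin (2 * (ω * (s + r))) / ω) (e s * e s) s := by
        intro s _
        have h0 : HasDerivAt (fun s : ℝ => 2 * (ω * (s + r))) (2*ω) s := by
          simpa [mul_comm, mul_assoc, mul_left_comm] using (harg s).const_mul 2
        have h1 := ((Real.hasDerivAt_sin _).comp s h0).div_const ω
        have h2 : HasDerivAt (fun s : ℝ => 2*(s+r)) 2 s := by
          simpa using ((hasDerivAt_id s).add_const r).const_mul 2
        have := h2.add h1
        refine this.congr_deriv ?_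
        rw [he, Real.cos_two_mul]
        field_simp
        ring
      rw [intervalIntegral.integral_eq_sub_of_hasDerivAt hder
        ((ce.mul ce).intervalIntegrable _ _)]
      simp [hsin4]
      ring
    -- ν
    have hβeq : β₀ = ω^2 * (α₀ + c m) := by
      rw [hray]; linear_combination (-(α₀ + c m)) * hω2
    have hacm : 0 < α₀ + c m := by
      nlinarith [hβ₀, hβeq, sq_nonneg ω]
    set ν : ℝ := Real.sqrt (α₀ + c m) with hνdef
    have hν2 : ν ^ 2 = α₀ + c m := Real.sq_sqrt hacm.le
    have hν0 : 0 < ν := Real.sqrt_pos.mpr hacm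
    have hνne : ν ≠ 0 := ne_of_gt hν0
    -- stage 1
    obtain ⟨u₀, p₀, hu₀d, hp₀d, hp₀a, hu₀val⟩ := solve2 ω (-r) 0 hωne Y hYc
    have hu₀c : Continuous u₀ :=
      Differentiable.continuous (fun s => (hu₀d s).differentiableAt)
    have hu₀r : u₀ r = 0 := by
      rw [hu₀val r, key Y hYc, hintY]
      ring
    set c₀ : ℝ := -(∫ s in (-r)..r, u₀ s * e s)/(4*r) with hc₀def
    set u : ℝ → ℝ := fun s => u₀ s + c₀ * e s with hudef
    set pu : ℝ → ℝ := fun s => p₀ s + c₀ * E1 s with hpudef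
    have hud : ∀ s, HasDerivAt u (pu s) s := fun s => (hu₀d s).add ((hEd s).const_mul c₀)
    have hpud : ∀ s, HasDerivAt pu (Y s - ω^2 * u s) s := by
      intro s
      have := (hp₀d s).add ((hE1d s).const_mul c₀)
      refine this.congr_deriv ?_
      simp only [hudef]
      ring
    have hpua : pu (-r) = 0 := by simp [hpudef, hp₀a, hE1r]
    have hur : u r = 0 := by simp [hudef, hu₀r, her]
    have huc : Continuous u := hu₀c.add (continuous_const.mul ce)
    have hue : (∫ s in (-r)..r, u s * e s) = 0 := by
      simp only [hudef]
      have h1 : ∀ s : ℝ, (u₀ s + c₀ * e s) * e s = u₀ s * e s + c₀ * (e s * e s) := by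
        intro s; ring
      simp_rw [h1]
      rw [intervalIntegral.integral_add (f := fun s => u₀ s * e s) (g := fun s => c₀ * (e s * e s)) ((hu₀c.mul ce).intervalIntegrable _ _)
        (((ce.mul ce).intervalIntegrable _ _).const_mul _),
        intervalIntegral.integral_const_mul, hee, hc₀def]
      field_simp
      ring
    -- stage 2 : choose A
    have hgen : ∀ I2 : ℝ, (Real.cos (ν * (r - (-r))) = 0 → I2 = 0) →
        ∃ A : ℝ, ν⁻¹ * I2 + A * Real.cos (ν * (r - (-r))) = 0 := by
      intro I2 hI20
      by_cases hcn : Real.cos (ν * (r - (-r))) = 0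
      · exact ⟨0, by rw [hI20 hcn, hcn]; ring⟩
      · exact ⟨-(ν⁻¹ * I2) / Real.cos (ν * (r - (-r))),
          by rw [div_mul_cancel₀ _ hcn]; ring⟩
    have hA : ∃ A : ℝ, ν⁻¹ * (∫ t in (-r)..r, Real.sin (ν * (r - t)) * u t)
        + A * Real.cos (ν * (r - (-r))) = 0 := by
      apply hgen
      intro hcn
      -- from hcn deduce ν = ω
      obtain ⟨k, hk⟩ := Real.cos_eq_zero_iff.mp hcn
      have hk0 : (0:ℝ) ≤ (k:ℝ) := by
        by_contra hneg
        push_neg at hneg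
        have hk1 : (k:ℝ) ≤ -1 := by
          have h2 : k < 0 := by exact_mod_cast hneg
          have h3 : k ≤ -1 := by omega
          exact_mod_cast h3
        nlinarith [hν0, hπ, hr, hk]
      set j : ℕ := k.toNat + 1 with hjdef
      have hj1 : 1 ≤ j := by omega
      have hjc : (j:ℝ) = (k:ℝ) + 1 := by
        have h4 : (k.toNat : ℝ) = (k:ℝ) := by
          exact_mod_cast Int.toNat_of_nonneg (by exact_mod_cast hk0)
        push_cast [hjdef]
        rw [h4]
      have hνval : ν = (2*(k:ℝ)+1) * π / (4*r) := by
        have h2 : ν * (2*r) = (2*(k:ℝ)+1) * π / 2 := by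
          rw [← hk]; ring
        field_simp at h2 ⊢
        linarith
      have hνj : ν ^ 2 = -(c j) := by
        rw [hc j, hjc, hνval]
        field_simp
        ring
      by_cases hjm : j = m
      · have hνω : ν = ω := by
          have hsq : ν ^ 2 = ω ^ 2 := by rw [hνj, hjm, ← hω2]
          rw [← Real.sqrt_sq hν0.le, ← Real.sqrt_sq hω0.le, hsq]
        rw [hνω, key u huc, hue]
        ring
      · exfalso
        apply hsimple j hj1 hjm
        have h1 : α₀ + c m + c j = 0 := by
          rw [← hν2, hνj]; ring
        linear_combination hray + (c j - c m) * h1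
    obtain ⟨A, hA0⟩ := hA
    obtain ⟨x, px, hxd, hpxd, hpxa, hxval⟩ := solve2 ν (-r) A hνne u huc
    have hxc : Continuous x :=
      Differentiable.continuous (fun s => (hxd s).differentiableAt)
    have hxr : x r = 0 := by rw [hxval r]; exact hA0
    -- chain
    have h3 : ∀ s, HasDerivAt (fun s => u s - ν^2 * x s) (pu s - ν^2 * px s) s :=
      fun s => (hud s).sub ((hxd s).const_mul (ν^2))
    have h4 : ∀ s, HasDerivAt (fun s => pu s - ν^2 * px s)
        ((Y s - ω^2 * u s) - ν^2 * (u s - ν^2 * x s)) s := by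
      intro s
      exact (hpud s).sub ((hpxd s).const_mul (ν^2))
    have hvc : Continuous fun s => (Y s - ω^2 * u s) - ν^2 * (u s - ν^2 * x s) :=
      (hYc.sub (continuous_const.mul huc)).sub
        (continuous_const.mul (huc.sub (continuous_const.mul hxc)))
    have hpxd' : ∀ s, HasDerivAt px (u s - ν^2 * x s) s := by
      intro s
      have := hpxd s
      simpa [pow_two] using this
    obtain ⟨hCD, hi1, hi2, hi3, hi4⟩ := chain4 hxd hpxd' h3 h4 hvc
    refine ⟨x, hCD, ?_, ?_, hxr, ?_, ?_⟩
    · rw [hi1]; exact hpxa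
    · rw [hi3]; simp [hpua, hpxa]
    · rw [hi2]; simp [hur, hxr]
    · intro s hs
      rw [hi4, hi2]
      simp only
      rw [← hYeq s hs]
      rw [hω2, hν2]
      linear_combination (x s) * hray
end
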